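/- arXiv:0706.1614 — 7 statements merged into one kernel-verified Lean document; each statement's English description precedes it below -/
import Mathlib

section
/- Fix a worker n, assume c_1 < c_2 < ... < c_K, and suppose Σ_{k=1}^K C_n/c_k > K and Σ_{k=1}^K c_k/C_n > K. Let m be the unique integer in {1,...,K−1} with c_m/C_n < (m − Σ_{k=1}^m c_k/C_n)/(K − m − Σ_{k=m+1}^K C_n/c_k) < c_{m+1}/C_n, and let Δ = m·(K−m) − (Σ_{p=1}^m c_p)·(Σ_{p=m+1}^K 1/c_p). Define α_k = (W_n/w_k)·((K−m) − Σ_{p=m+1}^K C_n/c_p)/Δ for k ≤ m and α_k = (B_n/b_k)·(m − Σ_{p=1}^m c_p/C_n)/Δ for k > m. Then α_k > 0 for every k, Σ_{k=1}^K α_k·b_k = B_n and Σ_{k=1}^K α_k·w_k = W_n (both the link and the processor are fully utilized), the quantity α_k·b_k is the same for all k > m, and the quantity α_k·w_k is the same for all k ≤ m. -/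
/-- On a worker `n` with `c_1 < ... < c_K`, `Σ_k C_n/c_k > K` and
`Σ_k c_k/C_n > K`, taking `m` the (unique) integer in `{1,...,K-1}` satisfying the
sandwich condition, `Δ = m(K−m) − (Σ_{p≤m} c_p)(Σ_{p>m} 1/c_p)` and the closed-form
rates `α`, we get: `α_k > 0`, both link and processor are fully utilized,
`α_k·b_k` is constant for `k > m`, and `α_k·w_k` is constant for `k ≤ m`. -/
theorem stmt_6 (K : ℕ) (hK : 2 ≤ K) (b w : ℕ → ℝ) (Bn Wn : ℝ)
    (hBn : 0 < Bn) (hWn : 0 < Wn)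
    (hb : ∀ k ∈ Finset.Icc 1 K, 0 < b k) (hw : ∀ k ∈ Finset.Icc 1 K, 0 < w k)
    (hc : ∀ k, 1 ≤ k → k < K → b k / w k < b (k + 1) / w (k + 1))
    (h1 : (K : ℝ) < ∑ k ∈ Finset.Icc 1 K, (Bn / Wn) / (b k / w k))
    (h2 : (K : ℝ) < ∑ k ∈ Finset.Icc 1 K, (b k / w k) / (Bn / Wn))
    (m : ℕ) (hm : m ∈ Finset.Icc 1 (K - 1))
    (hml : (b m / w m) / (Bn / Wn) <
      ((m : ℝ) - ∑ k ∈ Finset.Icc 1 m, (b k / w k) / (Bn / Wn)) /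
        ((K : ℝ) - (m : ℝ) - ∑ k ∈ Finset.Icc (m + 1) K, (Bn / Wn) / (b k / w k)))
    (hmr : ((m : ℝ) - ∑ k ∈ Finset.Icc 1 m, (b k / w k) / (Bn / Wn)) /
        ((K : ℝ) - (m : ℝ) - ∑ k ∈ Finset.Icc (m + 1) K, (Bn / Wn) / (b k / w k)) <
      (b (m + 1) / w (m + 1)) / (Bn / Wn))
    (Δ : ℝ)
    (hΔ : Δ = (m : ℝ) * ((K : ℝ) - (m : ℝ)) -
      (∑ p ∈ Finset.Icc 1 m, b p / w p) * (∑ p ∈ Finset.Icc (m + 1) K, 1 / (b p / w p)))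
    (α : ℕ → ℝ)
    (hα1 : ∀ k ∈ Finset.Icc 1 m, α k =
      (Wn / w k) * (((K : ℝ) - (m : ℝ)) -
        ∑ p ∈ Finset.Icc (m + 1) K, (Bn / Wn) / (b p / w p)) / Δ)
    (hα2 : ∀ k ∈ Finset.Icc (m + 1) K, α k =
      (Bn / b k) * ((m : ℝ) - ∑ p ∈ Finset.Icc 1 m, (b p / w p) / (Bn / Wn)) / Δ) :
    (∀ k ∈ Finset.Icc 1 K, 0 < α k) ∧
    (∑ k ∈ Finset.Icc 1 K, α k * b k = Bn) ∧
    (∑ k ∈ Finset.Icc 1 K, α k * w k = Wn) ∧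
    (∀ k ∈ Finset.Icc (m + 1) K, ∀ j ∈ Finset.Icc (m + 1) K, α k * b k = α j * b j) ∧
    (∀ k ∈ Finset.Icc 1 m, ∀ j ∈ Finset.Icc 1 m, α k * w k = α j * w j) := by
  have hWn' : Wn ≠ 0 := ne_of_gt hWn
  have hBn' : Bn ≠ 0 := ne_of_gt hBn
  have hC : (0:ℝ) < Bn / Wn := div_pos hBn hWn
  obtain ⟨hm1, hm2⟩ := Finset.mem_Icc.mp hm
  have hmK : m < K := by omega
  have hmem1 : ∀ k, k ∈ Finset.Icc 1 m → k ∈ Finset.Icc 1 K := by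
    intro k hk; rw [Finset.mem_Icc] at *; omega
  have hmem2 : ∀ k, k ∈ Finset.Icc (m+1) K → k ∈ Finset.Icc 1 K := by
    intro k hk; rw [Finset.mem_Icc] at *; omega
  have hcpos : ∀ k ∈ Finset.Icc 1 K, (0:ℝ) < b k / w k :=
    fun k hk => div_pos (hb k hk) (hw k hk)
  -- rewrite the sums
  have hsum1 : (∑ k ∈ Finset.Icc 1 m, (b k / w k) / (Bn / Wn)) =
      (∑ p ∈ Finset.Icc 1 m, b p / w p) / (Bn / Wn) := by rw [Finset.sum_div]
  have hsum2 : (∑ k ∈ Finset.Icc (m+1) K, (Bn / Wn) / (b k / w k)) =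
      (Bn / Wn) * (∑ p ∈ Finset.Icc (m+1) K, 1 / (b p / w p)) := by
    rw [Finset.mul_sum]; simp only [mul_one_div]
  simp only [hsum1, hsum2] at hml hα1 hα2
  set C : ℝ := Bn / Wn with hCh
  set S1 : ℝ := ∑ p ∈ Finset.Icc 1 m, b p / w p with hS1h
  set S2 : ℝ := ∑ p ∈ Finset.Icc (m+1) K, 1 / (b p / w p) with hS2h
  set A : ℝ := (m:ℝ) - S1 / C with hAh
  set D : ℝ := (K:ℝ) - (m:ℝ) - C * S2 with hDh
  clear_value C S1 S2 A D
  clear hc hmr h1 h2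
  have hS2pos : 0 < S2 := by
    rw [hS2h]
    apply Finset.sum_pos
    · intro p hp
      have := hcpos p (hmem2 p hp)
      positivity
    · exact ⟨m+1, Finset.mem_Icc.mpr ⟨le_refl _, by omega⟩⟩
  have hmpos : (0:ℝ) < (m:ℝ) := by exact_mod_cast (by omega : 0 < m)
  have hcm : (0:ℝ) < (b m / w m) / C :=
    div_pos (hcpos m (Finset.mem_Icc.mpr ⟨hm1, le_of_lt hmK⟩)) hC
  have hAD : 0 < A / D := lt_trans hcm hml
  have hΔeq : Δ = A * (C * S2) + (m:ℝ) * D := by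
    rw [hΔ, hAh, hDh]
    field_simp [ne_of_gt hC]
    ring
  obtain ⟨hΔne, hP, hQ⟩ : Δ ≠ 0 ∧ 0 < Wn * D / Δ ∧ 0 < Bn * A / Δ := by
    rcases div_pos_iff.mp hAD with ⟨hA, hD⟩ | ⟨hA, hD⟩
    · have hΔpos : 0 < Δ := by
        rw [hΔeq]
        exact add_pos (mul_pos hA (mul_pos hC hS2pos)) (mul_pos hmpos hD)
      exact ⟨ne_of_gt hΔpos, div_pos (mul_pos hWn hD) hΔpos,
        div_pos (mul_pos hBn hA) hΔpos⟩
    · have hΔneg : Δ < 0 := by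
        rw [hΔeq]
        exact add_neg (mul_neg_of_neg_of_pos hA (mul_pos hC hS2pos))
          (mul_neg_of_pos_of_neg hmpos hD)
      exact ⟨ne_of_lt hΔneg,
        div_pos_iff.mpr (Or.inr ⟨mul_neg_of_pos_of_neg hWn hD, hΔneg⟩),
        div_pos_iff.mpr (Or.inr ⟨mul_neg_of_pos_of_neg hBn hA, hΔneg⟩)⟩
  -- constant values
  have hconst1 : ∀ k ∈ Finset.Icc 1 m, α k * w k = Wn * D / Δ := by
    intro k hk
    have hwk : w k ≠ 0 := ne_of_gt (hw k (hmem1 k hk))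
    rw [hα1 k hk]
    field_simp
  have hconst2 : ∀ k ∈ Finset.Icc (m+1) K, α k * b k = Bn * A / Δ := by
    intro k hk
    have hbk : b k ≠ 0 := ne_of_gt (hb k (hmem2 k hk))
    rw [hα2 k hk]
    field_simp
  have hval1 : ∀ k ∈ Finset.Icc 1 m, α k * b k = (Wn * D / Δ) * (b k / w k) := by
    intro k hk
    have hwk : w k ≠ 0 := ne_of_gt (hw k (hmem1 k hk))
    rw [hα1 k hk]
    ring
  have hval2 : ∀ k ∈ Finset.Icc (m+1) K, α k * w k = (Bn * A / Δ) * (1 / (b k / w k)) := by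
    intro k hk
    have hwk : w k ≠ 0 := ne_of_gt (hw k (hmem2 k hk))
    have hbk : b k ≠ 0 := ne_of_gt (hb k (hmem2 k hk))
    rw [hα2 k hk, one_div_div]
    ring
  have hsplit : ∀ f : ℕ → ℝ, (∑ k ∈ Finset.Icc 1 m, f k) + (∑ k ∈ Finset.Icc (m+1) K, f k)
      = ∑ k ∈ Finset.Icc 1 K, f k := by
    intro f
    rw [show (1:ℕ) = 0 + 1 from rfl, Finset.Icc_add_one_left_eq_Ioc, Finset.Icc_add_one_left_eq_Ioc, zero_add, Finset.Icc_add_one_left_eq_Ioc]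
    exact Finset.sum_Ioc_consecutive _ (Nat.zero_le m) (le_of_lt hmK)
  have hcard1 : (Finset.Icc 1 m).card = m := by rw [Nat.card_Icc]; omega
  have hcard2 : (Finset.Icc (m+1) K).card = K - m := by rw [Nat.card_Icc]; omega
  have hcast : ((K - m : ℕ) : ℝ) = (K:ℝ) - (m:ℝ) := by
    rw [Nat.cast_sub (le_of_lt hmK)]
  refine ⟨?_, ?_, ?_, ?_, ?_⟩
  · -- positivity of α
    intro k hk
    rw [Finset.mem_Icc] at hk
    by_cases hkm : k ≤ m
    · have hk' : k ∈ Finset.Icc 1 m := Finset.mem_Icc.mpr ⟨hk.1, hkm⟩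
      have h := hconst1 k hk'
      have hwk := hw k (Finset.mem_Icc.mpr hk)
      nlinarith [hP]
    · have hk' : k ∈ Finset.Icc (m+1) K := Finset.mem_Icc.mpr ⟨by omega, hk.2⟩
      have h := hconst2 k hk'
      have hbk := hb k (Finset.mem_Icc.mpr hk)
      nlinarith [hQ]
  · -- link fully utilized
    rw [← hsplit (fun k => α k * b k)]
    have e1 : (∑ k ∈ Finset.Icc 1 m, α k * b k) = (Wn * D / Δ) * S1 := by
      rw [hS1h, Finset.mul_sum]
      exact Finset.sum_congr rfl hval1
    have e2 : (∑ k ∈ Finset.Icc (m+1) K, α k * b k) = ((K:ℝ) - (m:ℝ)) * (Bn * A / Δ) := by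
      rw [Finset.sum_congr rfl hconst2, Finset.sum_const, hcard2, nsmul_eq_mul, hcast]
    rw [e1, e2, hAh, hDh, hΔ, hCh]
    have hΔne' : (m:ℝ) * ((K:ℝ) - (m:ℝ)) - S1 * S2 ≠ 0 := by rw [← hΔ]; exact hΔne
    field_simp
    rw [div_eq_iff (by rw [mul_comm S2 S1]; exact hΔne')]
    ring
  · -- processor fully utilized
    rw [← hsplit (fun k => α k * w k)]
    have e1 : (∑ k ∈ Finset.Icc 1 m, α k * w k) = (m:ℝ) * (Wn * D / Δ) := by
      rw [Finset.sum_congr rfl hconst1, Finset.sum_const, hcard1, nsmul_eq_mul]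
    have e2 : (∑ k ∈ Finset.Icc (m+1) K, α k * w k) = (Bn * A / Δ) * S2 := by
      rw [hS2h, Finset.mul_sum]
      exact Finset.sum_congr rfl hval2
    rw [e1, e2, hAh, hDh, hΔ, hCh]
    have hΔne' : (m:ℝ) * ((K:ℝ) - (m:ℝ)) - S1 * S2 ≠ 0 := by rw [← hΔ]; exact hΔne
    field_simp
    rw [div_eq_iff (by rw [mul_comm S2 S1]; exact hΔne')]
    ring
  · intro k hk j hj
    rw [hconst2 k hk, hconst2 j hj]
  · intro k hk j hj
    rw [hconst1 k hk, hconst1 j hj]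
end

section
/- Fix a worker n, assume c_1 < c_2 < ... < c_K, and suppose Σ_{k=1}^K C_n/c_k > K and Σ_{k=1}^K c_k/C_n > K. Let m and the rates α_k be as given by the closed-form Nash equilibrium on worker n, and define the sequential communication time ratios μ_k = α_k·b_k/B_n and the sequential computation time ratios ν_k = α_k·w_k/W_n. Then μ_1 ≤ μ_2 ≤ ... ≤ μ_m < μ_{m+1} = ... = μ_K, ν_1 = ... = ν_m > ν_{m+1} ≥ ... ≥ ν_K, and Σ_{k=1}^K μ_k = Σ_{k=1}^K ν_k = 1. -/
set_option maxHeartbeats 1600000 in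
/-- On a worker `n` in the "continuous" case, with `m` and the
closed-form Nash rates `α`, the sequential communication time ratios
`μ_k = α_k·b_k/B_n` and computation time ratios `ν_k = α_k·w_k/W_n` satisfy
`μ_1 ≤ ... ≤ μ_m < μ_{m+1} = ... = μ_K`, `ν_1 = ... = ν_m > ν_{m+1} ≥ ... ≥ ν_K`,
and `Σ μ_k = Σ ν_k = 1`. -/
theorem stmt_8 (K : ℕ) (hK : 2 ≤ K) (b w : ℕ → ℝ) (Bn Wn : ℝ)
    (hBn : 0 < Bn) (hWn : 0 < Wn)
    (hb : ∀ k ∈ Finset.Icc 1 K, 0 < b k) (hw : ∀ k ∈ Finset.Icc 1 K, 0 < w k)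
    (hc : ∀ k, 1 ≤ k → k < K → b k / w k < b (k + 1) / w (k + 1))
    (h1 : (K : ℝ) < ∑ k ∈ Finset.Icc 1 K, (Bn / Wn) / (b k / w k))
    (h2 : (K : ℝ) < ∑ k ∈ Finset.Icc 1 K, (b k / w k) / (Bn / Wn))
    (m : ℕ) (hm : m ∈ Finset.Icc 1 (K - 1))
    (hml : (b m / w m) / (Bn / Wn) <
      ((m : ℝ) - ∑ k ∈ Finset.Icc 1 m, (b k / w k) / (Bn / Wn)) /
        ((K : ℝ) - (m : ℝ) - ∑ k ∈ Finset.Icc (m + 1) K, (Bn / Wn) / (b k / w k)))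
    (hmr : ((m : ℝ) - ∑ k ∈ Finset.Icc 1 m, (b k / w k) / (Bn / Wn)) /
        ((K : ℝ) - (m : ℝ) - ∑ k ∈ Finset.Icc (m + 1) K, (Bn / Wn) / (b k / w k)) <
      (b (m + 1) / w (m + 1)) / (Bn / Wn))
    (Δ : ℝ)
    (hΔ : Δ = (m : ℝ) * ((K : ℝ) - (m : ℝ)) -
      (∑ p ∈ Finset.Icc 1 m, b p / w p) * (∑ p ∈ Finset.Icc (m + 1) K, 1 / (b p / w p)))
    (α : ℕ → ℝ)
    (hα1 : ∀ k ∈ Finset.Icc 1 m, α k =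
      (Wn / w k) * (((K : ℝ) - (m : ℝ)) -
        ∑ p ∈ Finset.Icc (m + 1) K, (Bn / Wn) / (b p / w p)) / Δ)
    (hα2 : ∀ k ∈ Finset.Icc (m + 1) K, α k =
      (Bn / b k) * ((m : ℝ) - ∑ p ∈ Finset.Icc 1 m, (b p / w p) / (Bn / Wn)) / Δ)
    (μ ν : ℕ → ℝ)
    (hμ : ∀ k ∈ Finset.Icc 1 K, μ k = α k * b k / Bn)
    (hν : ∀ k ∈ Finset.Icc 1 K, ν k = α k * w k / Wn) :
    (∀ k, 1 ≤ k → k < m → μ k ≤ μ (k + 1)) ∧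
    (μ m < μ (m + 1)) ∧
    (∀ k ∈ Finset.Icc (m + 1) K, ∀ j ∈ Finset.Icc (m + 1) K, μ k = μ j) ∧
    (∀ k ∈ Finset.Icc 1 m, ∀ j ∈ Finset.Icc 1 m, ν k = ν j) ∧
    (ν (m + 1) < ν m) ∧
    (∀ k, m + 1 ≤ k → k < K → ν (k + 1) ≤ ν k) ∧
    (∑ k ∈ Finset.Icc 1 K, μ k = 1) ∧
    (∑ k ∈ Finset.Icc 1 K, ν k = 1) := by
  simp only [Finset.mem_Icc] at hm
  obtain ⟨hm1, hm2⟩ := hm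
  have hmK : m + 1 ≤ K := by omega
  have hBne : Bn ≠ 0 := ne_of_gt hBn
  have hWne : Wn ≠ 0 := ne_of_gt hWn
  have hCpos : 0 < Bn / Wn := div_pos hBn hWn
  have hCne : Bn / Wn ≠ 0 := ne_of_gt hCpos
  have hcpos : ∀ k, 1 ≤ k → k ≤ K → 0 < b k / w k := fun k u1 u2 =>
    div_pos (hb k (Finset.mem_Icc.mpr ⟨u1, u2⟩)) (hw k (Finset.mem_Icc.mpr ⟨u1, u2⟩))
  set S := ∑ p ∈ Finset.Icc 1 m, b p / w p with hS_def
  set T := ∑ p ∈ Finset.Icc (m+1) K, 1 / (b p / w p) with hT_def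
  set A := (K : ℝ) - (m : ℝ) - ∑ k ∈ Finset.Icc (m + 1) K, (Bn / Wn) / (b k / w k) with hA_def
  set M := (m : ℝ) - ∑ k ∈ Finset.Icc 1 m, (b k / w k) / (Bn / Wn) with hM_def
  have hCT : ∑ k ∈ Finset.Icc (m+1) K, (Bn / Wn) / (b k / w k) = (Bn / Wn) * T := by
    rw [hT_def, Finset.mul_sum]
    exact Finset.sum_congr rfl fun p _ => by rw [mul_one_div]
  have hAeq : A = ((K : ℝ) - (m : ℝ)) - (Bn / Wn) * T := by rw [hA_def, hCT]
  have hMeq : M = (m : ℝ) - S / (Bn / Wn) := by rw [hM_def, hS_def, Finset.sum_div]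
  clear_value S T A M
  have hTpos : 0 < T := by
    rw [hT_def]
    apply Finset.sum_pos
    · intro p hp
      simp only [Finset.mem_Icc] at hp
      exact one_div_pos.mpr (hcpos p (by omega) hp.2)
    · exact Finset.nonempty_Icc.mpr hmK
  have hcm : 0 < (b m / w m) / (Bn / Wn) :=
    div_pos (hcpos m hm1 (by omega)) hCpos
  have hAne : A ≠ 0 := by
    intro h
    rw [h, div_zero] at hml
    linarith
  have hMA : 0 < M / A := lt_trans hcm hml
  have hΔ2 : Δ = (m : ℝ) * A + (Bn / Wn) * T * M := by
    rw [hΔ, hAeq, hMeq]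
    field_simp
    ring
  have hmpos : (0:ℝ) < (m:ℝ) := by exact_mod_cast Nat.pos_of_ne_zero (by omega)
  have hCTpos : 0 < (Bn / Wn) * T := mul_pos hCpos hTpos
  have hkey : 0 < A / Δ ∧ 0 < M / Δ := by
    rcases hAne.lt_or_gt with hA | hA
    · have hM : M < 0 := by
        rcases div_pos_iff.mp hMA with ⟨_, h⟩ | ⟨h, _⟩
        · linarith
        · exact h
      have hΔneg : Δ < 0 := by
        rw [hΔ2]
        have u1 := mul_neg_of_pos_of_neg hmpos hA
        have u2 := mul_neg_of_pos_of_neg hCTpos hM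
        linarith
      exact ⟨div_pos_of_neg_of_neg hA hΔneg, div_pos_of_neg_of_neg hM hΔneg⟩
    · have hM : 0 < M := by
        rcases div_pos_iff.mp hMA with ⟨h, _⟩ | ⟨_, h⟩
        · exact h
        · linarith
      have hΔpos : 0 < Δ := by
        rw [hΔ2]
        have u1 := mul_pos hmpos hA
        have u2 := mul_pos hCTpos hM
        linarith
      exact ⟨div_pos hA hΔpos, div_pos hM hΔpos⟩
  obtain ⟨hAΔ, hMΔ⟩ := hkey
  have hΔne : Δ ≠ 0 := by
    intro h
    rw [h, div_zero] at hAΔ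
    exact lt_irrefl _ hAΔ
  -- closed forms
  have hμle : ∀ k, 1 ≤ k → k ≤ m → μ k = (b k / w k) / (Bn / Wn) * (A / Δ) := by
    intro k u1 u2
    have hwk : w k ≠ 0 := ne_of_gt (hw k (Finset.mem_Icc.mpr ⟨u1, by omega⟩))
    rw [hμ k (Finset.mem_Icc.mpr ⟨u1, by omega⟩), hα1 k (Finset.mem_Icc.mpr ⟨u1, u2⟩)]
    field_simp
  have hμgt : ∀ k, m + 1 ≤ k → k ≤ K → μ k = M / Δ := by
    intro k u1 u2
    have hbk : b k ≠ 0 := ne_of_gt (hb k (Finset.mem_Icc.mpr ⟨by omega, u2⟩))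
    rw [hμ k (Finset.mem_Icc.mpr ⟨by omega, u2⟩), hα2 k (Finset.mem_Icc.mpr ⟨u1, u2⟩)]
    field_simp
  have hνle : ∀ k, 1 ≤ k → k ≤ m → ν k = A / Δ := by
    intro k u1 u2
    have hwk : w k ≠ 0 := ne_of_gt (hw k (Finset.mem_Icc.mpr ⟨u1, by omega⟩))
    rw [hν k (Finset.mem_Icc.mpr ⟨u1, by omega⟩), hα1 k (Finset.mem_Icc.mpr ⟨u1, u2⟩)]
    field_simp
  have hνgt : ∀ k, m + 1 ≤ k → k ≤ K → ν k = (Bn / Wn) / (b k / w k) * (M / Δ) := by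
    intro k u1 u2
    have hbk : b k ≠ 0 := ne_of_gt (hb k (Finset.mem_Icc.mpr ⟨by omega, u2⟩))
    have hwk : w k ≠ 0 := ne_of_gt (hw k (Finset.mem_Icc.mpr ⟨by omega, u2⟩))
    rw [hν k (Finset.mem_Icc.mpr ⟨by omega, u2⟩), hα2 k (Finset.mem_Icc.mpr ⟨u1, u2⟩)]
    field_simp
  -- sum machinery
  have hunion : Finset.Icc 1 m ∪ Finset.Icc (m+1) K = Finset.Icc 1 K := by
    ext x
    simp only [Finset.mem_union, Finset.mem_Icc]
    omega
  have hdisj : Disjoint (Finset.Icc 1 m) (Finset.Icc (m+1) K) := by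
    rw [Finset.disjoint_left]
    intro x hx hx'
    simp only [Finset.mem_Icc] at hx hx'
    omega
  have hcard1 : (Finset.Icc 1 m).card = m := by rw [Nat.card_Icc]; omega
  have hcard2 : (Finset.Icc (m+1) K).card = K - m := by rw [Nat.card_Icc]; omega
  refine ⟨?_, ?_, ?_, ?_, ?_, ?_, ?_, ?_⟩
  · -- μ increasing on [1, m]
    intro k hk1 hk2
    rw [hμle k hk1 (by omega), hμle (k+1) (by omega) (by omega)]
    have hlt := hc k hk1 (by omega)
    exact mul_le_mul_of_nonneg_right
      (div_le_div_of_nonneg_right (le_of_lt hlt) (le_of_lt hCpos)) (le_of_lt hAΔ)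
  · -- μ m < μ (m+1)
    rw [hμle m hm1 le_rfl, hμgt (m+1) le_rfl hmK]
    have u1 : (b m / w m) / (Bn / Wn) * (A / Δ) < M / A * (A / Δ) :=
      mul_lt_mul_of_pos_right hml hAΔ
    have u2 : M / A * (A / Δ) = M / Δ := by field_simp
    linarith
  · -- μ constant on [m+1, K]
    intro k hk j hj
    simp only [Finset.mem_Icc] at hk hj
    rw [hμgt k hk.1 hk.2, hμgt j hj.1 hj.2]
  · -- ν constant on [1, m]
    intro k hk j hj
    simp only [Finset.mem_Icc] at hk hj
    rw [hνle k hk.1 hk.2, hνle j hj.1 hj.2]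
  · -- ν (m+1) < ν m
    rw [hνgt (m+1) le_rfl hmK, hνle m hm1 le_rfl]
    have hc1 : 0 < b (m+1) / w (m+1) := hcpos (m+1) (by omega) hmK
    have hq : 0 < (Bn / Wn) / (b (m+1) / w (m+1)) := div_pos hCpos hc1
    have u1 : (Bn / Wn) / (b (m+1) / w (m+1)) * (M / A) <
        (Bn / Wn) / (b (m+1) / w (m+1)) * ((b (m+1) / w (m+1)) / (Bn / Wn)) :=
      mul_lt_mul_of_pos_left hmr hq
    have u2 : (Bn / Wn) / (b (m+1) / w (m+1)) * ((b (m+1) / w (m+1)) / (Bn / Wn)) = 1 := by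
      rw [div_mul_div_comm, div_eq_one_iff_eq (by positivity)]
      ring
    have u3 : (Bn / Wn) / (b (m+1) / w (m+1)) * (M / Δ) =
        ((Bn / Wn) / (b (m+1) / w (m+1)) * (M / A)) * (A / Δ) := by
      have uu : M / A * (A / Δ) = M / Δ := by field_simp
      rw [mul_assoc, uu]
    have u4 : ((Bn / Wn) / (b (m+1) / w (m+1)) * (M / A)) * (A / Δ) < 1 * (A / Δ) :=
      mul_lt_mul_of_pos_right (by linarith) hAΔ
    linarith
  · -- ν decreasing on [m+1, K]
    intro k hk1 hk2
    rw [hνgt k hk1 (by omega), hνgt (k+1) (by omega) hk2]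
    have hlt := hc k (by omega) hk2
    have h0 : 0 < b k / w k := hcpos k (by omega) (by omega)
    exact mul_le_mul_of_nonneg_right
      (div_le_div_of_nonneg_left (le_of_lt hCpos) h0 (le_of_lt hlt)) (le_of_lt hMΔ)
  · -- Σ μ = 1
    rw [← hunion, Finset.sum_union hdisj]
    have e1 : ∑ k ∈ Finset.Icc 1 m, μ k = S / (Bn / Wn) * (A / Δ) := by
      rw [hS_def, Finset.sum_div, Finset.sum_mul]
      exact Finset.sum_congr rfl fun k hk => by
        simp only [Finset.mem_Icc] at hk
        exact hμle k hk.1 hk.2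
    have e2 : ∑ k ∈ Finset.Icc (m+1) K, μ k = ((K : ℝ) - (m : ℝ)) * (M / Δ) := by
      calc ∑ k ∈ Finset.Icc (m+1) K, μ k
          = ∑ _k ∈ Finset.Icc (m+1) K, M / Δ := Finset.sum_congr rfl fun k hk => by
            simp only [Finset.mem_Icc] at hk
            exact hμgt k hk.1 hk.2
        _ = ((K - m : ℕ) : ℝ) * (M / Δ) := by rw [Finset.sum_const, hcard2, nsmul_eq_mul]
        _ = ((K : ℝ) - (m : ℝ)) * (M / Δ) := by rw [Nat.cast_sub (by omega)]
    rw [e1, e2]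
    have hid : S / (Bn / Wn) * A + ((K : ℝ) - (m : ℝ)) * M = Δ := by
      rw [hΔ, hAeq, hMeq]
      field_simp
      ring
    have e3 : S / (Bn / Wn) * (A / Δ) + ((K : ℝ) - (m : ℝ)) * (M / Δ) =
        (S / (Bn / Wn) * A + ((K : ℝ) - (m : ℝ)) * M) / Δ := by ring
    rw [e3, hid, div_self hΔne]
  · -- Σ ν = 1
    rw [← hunion, Finset.sum_union hdisj]
    have e1 : ∑ k ∈ Finset.Icc 1 m, ν k = (m : ℝ) * (A / Δ) := by
      calc ∑ k ∈ Finset.Icc 1 m, ν k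
          = ∑ _k ∈ Finset.Icc 1 m, A / Δ := Finset.sum_congr rfl fun k hk => by
            simp only [Finset.mem_Icc] at hk
            exact hνle k hk.1 hk.2
        _ = (m : ℝ) * (A / Δ) := by rw [Finset.sum_const, hcard1, nsmul_eq_mul]
    have e2 : ∑ k ∈ Finset.Icc (m+1) K, ν k = (Bn / Wn) * T * (M / Δ) := by
      calc ∑ k ∈ Finset.Icc (m+1) K, ν k
          = ∑ k ∈ Finset.Icc (m+1) K, (Bn / Wn) / (b k / w k) * (M / Δ) :=
            Finset.sum_congr rfl fun k hk => by
              simp only [Finset.mem_Icc] at hk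
              exact hνgt k hk.1 hk.2
        _ = (∑ k ∈ Finset.Icc (m+1) K, (Bn / Wn) / (b k / w k)) * (M / Δ) :=
            (Finset.sum_mul _ _ _).symm
        _ = (Bn / Wn) * T * (M / Δ) := by rw [hCT]
    rw [e1, e2]
    have e3 : (m : ℝ) * (A / Δ) + (Bn / Wn) * T * (M / Δ) =
        ((m : ℝ) * A + (Bn / Wn) * T * M) / Δ := by ring
    rw [e3, ← hΔ2, div_self hΔne]
end

section
/- Consider a system S = (K,b,w,N,B,W) with c_1 < c_2 < ... < c_K and define its equivalent subsystem S̃ = (K,b,w,N,B̃,W̃) by: W̃_n = Σ_{k=1}^K B_n/(K·c_k) if Σ_{k=1}^K C_n/c_k ≤ K, and W̃_n = W_n otherwise; B̃_n = Σ_{k=1}^K W_n·c_k/K if Σ_{k=1}^K c_k/C_n ≤ K, and B̃_n = B_n otherwise. Then: (i) S̃ is a subsystem of S, i.e., B̃_n ≤ B_n and W̃_n ≤ W_n for every worker n; and (ii) the Nash-equilibrium rates of S̃ coincide with those of S, i.e., α̃^nc_{n,k} = α^nc_{n,k} for every worker n and application k. -/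
/-- The closed-form Nash-equilibrium rate of application `k` on a worker with
bandwidth `Bn` and computing power `Wn`, for `K` applications with task sizes
`b` and `w` (indexed `1,...,K`), writing `c_k = b_k/w_k` and `C_n = B_n/W_n`:
if `Σ_k C_n/c_k ≤ K` the rate is `B_n/(K·b_k)`; otherwise if `Σ_k c_k/C_n ≤ K`
it is `W_n/(K·w_k)`; otherwise it is given by the two-regime formula determined
by the unique `m ∈ {1,...,K-1}` satisfying the sandwich condition. -/
noncomputable def nashRate (K : ℕ) (b w : ℕ → ℝ) (Bn Wn : ℝ) (k : ℕ) : ℝ :=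
  if (∑ j ∈ Finset.Icc 1 K, (Bn / Wn) / (b j / w j)) ≤ (K : ℝ) then
    Bn / (K * b k)
  else if (∑ j ∈ Finset.Icc 1 K, (b j / w j) / (Bn / Wn)) ≤ (K : ℝ) then
    Wn / (K * w k)
  else if h : ∃ m, m ∈ Finset.Icc 1 (K - 1) ∧
      (b m / w m) / (Bn / Wn) <
        ((m : ℝ) - ∑ j ∈ Finset.Icc 1 m, (b j / w j) / (Bn / Wn)) /
          ((K : ℝ) - (m : ℝ) - ∑ j ∈ Finset.Icc (m + 1) K, (Bn / Wn) / (b j / w j)) ∧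
      ((m : ℝ) - ∑ j ∈ Finset.Icc 1 m, (b j / w j) / (Bn / Wn)) /
          ((K : ℝ) - (m : ℝ) - ∑ j ∈ Finset.Icc (m + 1) K, (Bn / Wn) / (b j / w j)) <
        (b (m + 1) / w (m + 1)) / (Bn / Wn) then
    let m := h.choose
    let Δ : ℝ := (m : ℝ) * ((K : ℝ) - (m : ℝ)) -
      (∑ p ∈ Finset.Icc 1 m, b p / w p) * (∑ p ∈ Finset.Icc (m + 1) K, 1 / (b p / w p))
    if k ≤ m then
      (Wn / w k) * (((K : ℝ) - (m : ℝ)) -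
        ∑ p ∈ Finset.Icc (m + 1) K, (Bn / Wn) / (b p / w p)) / Δ
    else
      (Bn / b k) * ((m : ℝ) - ∑ p ∈ Finset.Icc 1 m, (b p / w p) / (Bn / Wn)) / Δ
  else 0

/-- A throughput vector `α` is feasible for the system `(K,b,w,N,B,W)` if it can be
decomposed into per-worker rates `A n k ≥ 0` respecting every worker's communication
and computation constraints. -/
def Feasible (N K : ℕ) (B W b w : ℕ → ℝ) (α : ℕ → ℝ) : Prop :=
  (∀ k ∈ Finset.Icc 1 K, 0 ≤ α k) ∧
  ∃ A : ℕ → ℕ → ℝ,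
    (∀ n ∈ Finset.Icc 1 N, ∀ k ∈ Finset.Icc 1 K, 0 ≤ A n k) ∧
    (∀ k ∈ Finset.Icc 1 K, α k = ∑ n ∈ Finset.Icc 1 N, A n k) ∧
    (∀ n ∈ Finset.Icc 1 N, ∑ k ∈ Finset.Icc 1 K, A n k * w k ≤ W n) ∧
    (∀ n ∈ Finset.Icc 1 N, ∑ k ∈ Finset.Icc 1 K, A n k * b k ≤ B n)

/-- The computing power of worker `n` in the equivalent subsystem:
`W̃_n = Σ_k B_n/(K·c_k)` if `Σ_k C_n/c_k ≤ K` (i.e. `𝒲_n = ∅`), else `W_n`. -/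
noncomputable def tildeW (K : ℕ) (b w : ℕ → ℝ) (Bn Wn : ℝ) : ℝ :=
  if (∑ k ∈ Finset.Icc 1 K, (Bn / Wn) / (b k / w k)) ≤ (K : ℝ) then
    ∑ k ∈ Finset.Icc 1 K, Bn / (K * (b k / w k))
  else Wn

/-- The bandwidth of worker `n` in the equivalent subsystem:
`B̃_n = Σ_k W_n·c_k/K` if `Σ_k c_k/C_n ≤ K` (i.e. `ℬ_n = ∅`), else `B_n`. -/
noncomputable def tildeB (K : ℕ) (b w : ℕ → ℝ) (Bn Wn : ℝ) : ℝ :=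
  if (∑ k ∈ Finset.Icc 1 K, (b k / w k) / (Bn / Wn)) ≤ (K : ℝ) then
    ∑ k ∈ Finset.Icc 1 K, Wn * (b k / w k) / K
  else Bn


open Finset

private lemma nashRate_first (K : ℕ) (b w : ℕ → ℝ) (Bn Wn : ℝ) (k : ℕ)
    (h : (∑ j ∈ Finset.Icc 1 K, (Bn / Wn) / (b j / w j)) ≤ (K : ℝ)) :
    nashRate K b w Bn Wn k = Bn / (K * b k) := by
  unfold nashRate; rw [if_pos h]

private lemma nashRate_second (K : ℕ) (b w : ℕ → ℝ) (Bn Wn : ℝ) (k : ℕ)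
    (h1 : ¬ (∑ j ∈ Finset.Icc 1 K, (Bn / Wn) / (b j / w j)) ≤ (K : ℝ))
    (h2 : (∑ j ∈ Finset.Icc 1 K, (b j / w j) / (Bn / Wn)) ≤ (K : ℝ)) :
    nashRate K b w Bn Wn k = Wn / (K * w k) := by
  unfold nashRate; rw [if_neg h1, if_pos h2]

private lemma sum_div_eq (s : Finset ℕ) (X : ℝ) (c : ℕ → ℝ) :
    ∑ j ∈ s, X / c j = X * ∑ j ∈ s, 1 / c j := by
  rw [Finset.mul_sum]; exact Finset.sum_congr rfl fun j _ => (mul_one_div X (c j)).symm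


private lemma two_le_div_add_div {x y : ℝ} (hx : 0 < x) (hy : 0 < y) :
    2 ≤ x / y + y / x := by
  rw [div_add_div _ _ (ne_of_gt hy) (ne_of_gt hx), le_div_iff₀ (by positivity)]
  nlinarith [sq_nonneg (x - y)]

private lemma two_lt_div_add_div {x y : ℝ} (hx : 0 < x) (hy : 0 < y) (hxy : x ≠ y) :
    2 < x / y + y / x := by
  rw [div_add_div _ _ (ne_of_gt hy) (ne_of_gt hx), lt_div_iff₀ (by positivity)]
  nlinarith [sq_pos_of_ne_zero (sub_ne_zero.mpr hxy)]

private lemma double_sum_eq (K : ℕ) (c : ℕ → ℝ) :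
    2 * ((∑ k ∈ Icc 1 K, c k) * (∑ k ∈ Icc 1 K, 1 / c k))
      = ∑ j ∈ Icc 1 K, ∑ k ∈ Icc 1 K, (c j / c k + c k / c j) := by
  rw [Finset.sum_mul_sum]
  have h1 : ∀ j k : ℕ, c j * (1 / c k) = c j / c k := fun j k => mul_one_div _ _
  simp only [h1, Finset.sum_add_distrib, two_mul]
  congr 1
  exact Finset.sum_comm

private lemma cauchy_gt (K : ℕ) (hK : 2 ≤ K) (c : ℕ → ℝ)
    (hc : ∀ k ∈ Icc 1 K, 0 < c k) (h12 : c 1 ≠ c 2) :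
    (K : ℝ)^2 < (∑ k ∈ Icc 1 K, c k) * (∑ k ∈ Icc 1 K, 1 / c k) := by
  have h2 : (1 : ℕ) ∈ Icc 1 K := by simp [hK]; omega
  have h2' : (2 : ℕ) ∈ Icc 1 K := by simp; omega
  have key : 2 * (K : ℝ)^2 < 2 * ((∑ k ∈ Icc 1 K, c k) * (∑ k ∈ Icc 1 K, 1 / c k)) := by
    rw [double_sum_eq]
    have hcard : (Icc 1 K).card = K := by simp
    calc 2 * (K:ℝ)^2 = ∑ j ∈ Icc 1 K, ∑ k ∈ Icc 1 K, (2:ℝ) := by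
          simp [hcard]; ring
      _ < _ := by
          apply Finset.sum_lt_sum
          · intro j hj
            apply Finset.sum_le_sum
            intro k hk
            exact two_le_div_add_div (hc j hj) (hc k hk)
          · refine ⟨1, h2, ?_⟩
            apply Finset.sum_lt_sum
            · intro k hk; exact two_le_div_add_div (hc 1 h2) (hc k hk)
            · exact ⟨2, h2', two_lt_div_add_div (hc 1 h2) (hc 2 h2') h12⟩
  linarith

private lemma cauchy_gt' (K : ℕ) (hK : 1 < K) (b w : ℕ → ℝ)
    (hb : ∀ k ∈ Icc 1 K, 0 < b k) (hw : ∀ k ∈ Icc 1 K, 0 < w k)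
    (h12 : b 1 / w 1 ≠ b 2 / w 2) :
    (K : ℝ)^2 < (∑ k ∈ Icc 1 K, b k / w k) * (∑ k ∈ Icc 1 K, 1 / (b k / w k)) :=
  cauchy_gt K hK (fun k => b k / w k) (fun k hk => div_pos (hb k hk) (hw k hk)) h12

private lemma worker (K : ℕ) (hK : 1 ≤ K) (b w : ℕ → ℝ) (Bn Wn : ℝ)
    (hBn : 0 < Bn) (hWn : 0 < Wn)
    (hb : ∀ k ∈ Icc 1 K, 0 < b k) (hw : ∀ k ∈ Icc 1 K, 0 < w k)
    (hc : ∀ k, 1 ≤ k → k < K → b k / w k < b (k + 1) / w (k + 1)) :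
    (tildeB K b w Bn Wn ≤ Bn ∧ tildeW K b w Bn Wn ≤ Wn) ∧
    ∀ k ∈ Icc 1 K, nashRate K b w (tildeB K b w Bn Wn) (tildeW K b w Bn Wn) k
      = nashRate K b w Bn Wn k := by
  have hKpos : (0:ℝ) < K := by exact_mod_cast hK
  have hKne : (K:ℝ) ≠ 0 := ne_of_gt hKpos
  have hne : (Icc 1 K).Nonempty := by rw [Finset.nonempty_Icc]; omega
  have hcpos : ∀ k ∈ Icc 1 K, 0 < b k / w k := fun k hk => div_pos (hb k hk) (hw k hk)
  have hP : 0 < ∑ k ∈ Icc 1 K, 1 / (b k / w k) :=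
    Finset.sum_pos (fun k hk => by have := hcpos k hk; positivity) hne
  have hQ : 0 < ∑ k ∈ Icc 1 K, b k / w k := Finset.sum_pos hcpos hne
  have hS1 : (∑ j ∈ Icc 1 K, (Bn / Wn) / (b j / w j))
      = (Bn / Wn) * ∑ k ∈ Icc 1 K, 1 / (b k / w k) := sum_div_eq _ _ _
  have hS2 : (∑ j ∈ Icc 1 K, (b j / w j) / (Bn / Wn))
      = (∑ k ∈ Icc 1 K, b k / w k) / (Bn / Wn) := (Finset.sum_div _ _ _).symm
  by_cases h1 : (∑ j ∈ Finset.Icc 1 K, (Bn / Wn) / (b j / w j)) ≤ (K : ℝ) <;>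
    by_cases h2 : (∑ j ∈ Finset.Icc 1 K, (b j / w j) / (Bn / Wn)) ≤ (K : ℝ)
  · -- Case C: both hold
    rcases eq_or_lt_of_le hK with hK1 | hK2
    · -- K = 1
      obtain rfl : K = 1 := hK1.symm
      simp only [Finset.Icc_self, Finset.sum_singleton, Nat.cast_one] at h1 h2
      have hc1 : 0 < b 1 / w 1 := hcpos 1 (by simp)
      have hEq : Bn / Wn = b 1 / w 1 := by
        have hl : Bn / Wn ≤ b 1 / w 1 := by
          rwa [div_le_one hc1] at h1
        have hr : b 1 / w 1 ≤ Bn / Wn := by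
          rwa [div_le_one (by positivity)] at h2
        linarith
      have htW : tildeW 1 b w Bn Wn = Wn := by
        unfold tildeW
        rw [if_pos (by simp only [Finset.Icc_self, Finset.sum_singleton, Nat.cast_one]; exact h1)]
        simp only [Finset.Icc_self, Finset.sum_singleton, Nat.cast_one, one_mul]
        rw [← hEq]
        field_simp
      have htB : tildeB 1 b w Bn Wn = Bn := by
        unfold tildeB
        rw [if_pos (by simp only [Finset.Icc_self, Finset.sum_singleton, Nat.cast_one]; exact h2)]
        simp only [Finset.Icc_self, Finset.sum_singleton, Nat.cast_one, div_one]
        rw [← hEq]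
        field_simp
      rw [htB, htW]
      exact ⟨⟨le_refl _, le_refl _⟩, fun k _ => rfl⟩
    · -- K ≥ 2 : contradiction
      exfalso
      have h12 : b 1 / w 1 ≠ b 2 / w 2 := ne_of_lt (hc 1 le_rfl hK2)
      have hCS := cauchy_gt' K hK2 b w hb hw h12
      rw [hS1] at h1
      rw [hS2] at h2
      have hCpos : 0 < Bn / Wn := by positivity
      have hprod : ((Bn/Wn) * (∑ k ∈ Icc 1 K, 1 / (b k / w k)))
          * ((∑ k ∈ Icc 1 K, b k / w k) / (Bn/Wn))
          = (∑ k ∈ Icc 1 K, b k / w k) * (∑ k ∈ Icc 1 K, 1 / (b k / w k)) := by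
        field_simp
      have hle := mul_le_mul h1 h2 (by positivity) hKpos.le
      rw [hprod] at hle
      nlinarith
  · -- Case A: h1 holds, h2 fails
    have htB : tildeB K b w Bn Wn = Bn := by unfold tildeB; rw [if_neg h2]
    have htW : tildeW K b w Bn Wn = (Bn / K) * ∑ k ∈ Icc 1 K, 1 / (b k / w k) := by
      unfold tildeW
      rw [if_pos h1, Finset.mul_sum]
      exact Finset.sum_congr rfl fun k hk => by rw [mul_one_div, div_div]
    have hWle : (Bn / K) * (∑ k ∈ Icc 1 K, 1 / (b k / w k)) ≤ Wn := by
      have hA : Bn * (∑ k ∈ Icc 1 K, 1 / (b k / w k)) ≤ K * Wn := by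
        rw [hS1, div_mul_eq_mul_div, div_le_iff₀ hWn] at h1
        linarith
      rw [div_mul_eq_mul_div, div_le_iff₀ hKpos]
      linarith
    refine ⟨⟨le_of_eq htB, htW ▸ hWle⟩, fun k hk => ?_⟩
    rw [htB, htW]
    obtain ⟨S, hSdef⟩ : ∃ S, (∑ k ∈ Icc 1 K, 1 / (b k / w k)) = S := ⟨_, rfl⟩
    have hSpos : 0 < S := hSdef ▸ hP
    rw [hSdef]
    have hcond : (∑ j ∈ Icc 1 K,
        (Bn / ((Bn / K) * S)) / (b j / w j)) = (K : ℝ) := by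
      rw [sum_div_eq, hSdef]
      field_simp
    rw [nashRate_first K b w _ _ k (le_of_eq hcond), nashRate_first K b w _ _ k h1]
  · -- Case B: h1 fails, h2 holds
    have htW : tildeW K b w Bn Wn = Wn := by unfold tildeW; rw [if_neg h1]
    have htB : tildeB K b w Bn Wn = (Wn / K) * ∑ k ∈ Icc 1 K, b k / w k := by
      unfold tildeB
      rw [if_pos h2, Finset.mul_sum]
      exact Finset.sum_congr rfl fun k hk => by ring
    have hBle : (Wn / K) * (∑ k ∈ Icc 1 K, b k / w k) ≤ Bn := by
      have hA : Wn * (∑ k ∈ Icc 1 K, b k / w k) ≤ K * Bn := by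
        rw [hS2, div_le_iff₀ (by positivity)] at h2
        have hmul := mul_le_mul_of_nonneg_right h2 hWn.le
        have hid : Bn / Wn * Wn = Bn := div_mul_cancel₀ _ (ne_of_gt hWn)
        nlinarith
      rw [div_mul_eq_mul_div, div_le_iff₀ hKpos]
      linarith
    refine ⟨⟨htB ▸ hBle, le_of_eq htW⟩, fun k hk => ?_⟩
    rw [htB, htW]
    rcases eq_or_lt_of_le hK with hK1 | hK2
    · -- K = 1
      obtain rfl : K = 1 := hK1.symm
      have hk1 : k = 1 := by simpa using hk
      subst hk1
      have hc1 : 0 < b 1 / w 1 := hcpos 1 (by simp)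
      have hw1 := hw 1 (by simp)
      have hb1 := hb 1 (by simp)
      have hcond : (∑ j ∈ Icc 1 1,
          ((Wn / ((1:ℕ):ℝ) * ∑ k ∈ Icc 1 1, b k / w k) / Wn) / (b j / w j)) = ((1:ℕ) : ℝ) := by
        simp only [Finset.Icc_self, Finset.sum_singleton, Nat.cast_one, div_one]
        field_simp
      rw [nashRate_first 1 b w _ _ 1 (le_of_eq hcond),
        nashRate_second 1 b w Bn Wn 1 h1 h2]
      simp only [Finset.Icc_self, Finset.sum_singleton, Nat.cast_one, one_mul, div_one]
      rw [div_eq_div_iff (by positivity) (by positivity)]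
      field_simp
    · -- K ≥ 2
      have h12 : b 1 / w 1 ≠ b 2 / w 2 := ne_of_lt (hc 1 le_rfl hK2)
      have hCS := cauchy_gt' K hK2 b w hb hw h12
      have hr : (Wn / K * ∑ k ∈ Icc 1 K, b k / w k) / Wn
          = (∑ k ∈ Icc 1 K, b k / w k) / K := by
        field_simp
      have hcond1 : ¬ (∑ j ∈ Icc 1 K,
          ((Wn / K * ∑ k ∈ Icc 1 K, b k / w k) / Wn) / (b j / w j)) ≤ (K : ℝ) := by
        rw [sum_div_eq, hr]
        push_neg
        rw [div_mul_eq_mul_div, lt_div_iff₀ hKpos]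
        nlinarith
      have hcond2 : (∑ j ∈ Icc 1 K,
          (b j / w j) / ((Wn / K * ∑ k ∈ Icc 1 K, b k / w k) / Wn)) = (K : ℝ) := by
        rw [← Finset.sum_div, hr]
        field_simp
      rw [nashRate_second K b w _ _ k hcond1 (le_of_eq hcond2),
        nashRate_second K b w Bn Wn k h1 h2]
  · -- Case D: both fail
    have htB : tildeB K b w Bn Wn = Bn := by unfold tildeB; rw [if_neg h2]
    have htW : tildeW K b w Bn Wn = Wn := by unfold tildeW; rw [if_neg h1]
    rw [htB, htW]
    exact ⟨⟨le_refl _, le_refl _⟩, fun k _ => rfl⟩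


/-- The equivalent subsystem `S̃ = (K,b,w,N,B̃,W̃)` of a system
`S = (K,b,w,N,B,W)` with `c_1 < ... < c_K` satisfies: (i) `B̃_n ≤ B_n` and
`W̃_n ≤ W_n` for every worker `n`, and (ii) its Nash-equilibrium rates coincide with
those of `S` on every worker and for every application. -/
theorem stmt_12 (N K : ℕ) (hK : 1 ≤ K) (B W b w : ℕ → ℝ)
    (hB : ∀ n ∈ Finset.Icc 1 N, 0 < B n) (hW : ∀ n ∈ Finset.Icc 1 N, 0 < W n)
    (hb : ∀ k ∈ Finset.Icc 1 K, 0 < b k) (hw : ∀ k ∈ Finset.Icc 1 K, 0 < w k)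
    (hc : ∀ k, 1 ≤ k → k < K → b k / w k < b (k + 1) / w (k + 1)) :
    (∀ n ∈ Finset.Icc 1 N,
      tildeB K b w (B n) (W n) ≤ B n ∧ tildeW K b w (B n) (W n) ≤ W n) ∧
    (∀ n ∈ Finset.Icc 1 N, ∀ k ∈ Finset.Icc 1 K,
      nashRate K b w (tildeB K b w (B n) (W n)) (tildeW K b w (B n) (W n)) k =
        nashRate K b w (B n) (W n) k) := by
  constructor
  · intro n hn
    exact (worker K hK b w (B n) (W n) (hB n hn) (hW n hn) hb hw hc).1
  · intro n hn k hk
    exact (worker K hK b w (B n) (W n) (hB n hn) (hW n hn) hb hw hc).2 k hk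
end

section
/- Consider two systems S = (K,b,w,N,B,W) and S' = (K,b,w,N,B',W') with the same applications and workers, such that B'_n ≥ B_n and W'_n ≥ W_n for every worker n. Let S̃ = (K,b,w,N,B̃,W̃) and S̃' = (K,b,w,N,B̃',W̃') be their respective equivalent subsystems. Then B̃'_n ≥ B̃_n and W̃'_n ≥ W̃_n for every worker n. -/
lemma tildeW_eq_min (K : ℕ) (hK : 0 < K) (b w : ℕ → ℝ) (Bn Wn : ℝ)
    (hWn : 0 < Wn) :
    tildeW K b w Bn Wn = min (∑ k ∈ Finset.Icc 1 K, Bn / (K * (b k / w k))) Wn := by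
  have hK' : (0:ℝ) < (K:ℝ) := by exact_mod_cast hK
  have h1 : (∑ k ∈ Finset.Icc 1 K, (Bn / Wn) / (b k / w k))
      = (∑ k ∈ Finset.Icc 1 K, Bn / (b k / w k)) / Wn := by
    rw [Finset.sum_div]
    apply Finset.sum_congr rfl
    intro k _
    rw [div_div, mul_comm Wn, ← div_div]
  have h2 : (∑ k ∈ Finset.Icc 1 K, Bn / (K * (b k / w k)))
      = (∑ k ∈ Finset.Icc 1 K, Bn / (b k / w k)) / (K:ℝ) := by
    rw [Finset.sum_div]
    apply Finset.sum_congr rfl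
    intro k _
    rw [div_div, mul_comm]
  have hiff : ((∑ k ∈ Finset.Icc 1 K, (Bn / Wn) / (b k / w k)) ≤ (K : ℝ)) ↔
      ((∑ k ∈ Finset.Icc 1 K, Bn / (K * (b k / w k))) ≤ Wn) := by
    rw [h1, h2, div_le_iff₀ hWn, div_le_iff₀ hK', mul_comm]
  unfold tildeW
  split_ifs with h
  · exact (min_eq_left (hiff.mp h)).symm
  · exact (min_eq_right (le_of_lt (lt_of_not_ge (fun hle => h (hiff.mpr hle))))).symm

lemma tildeB_eq_min (K : ℕ) (hK : 0 < K) (b w : ℕ → ℝ) (Bn Wn : ℝ)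
    (hBn : 0 < Bn) (hWn : 0 < Wn) :
    tildeB K b w Bn Wn = min (∑ k ∈ Finset.Icc 1 K, Wn * (b k / w k) / K) Bn := by
  have hK' : (0:ℝ) < (K:ℝ) := by exact_mod_cast hK
  have h1 : (∑ k ∈ Finset.Icc 1 K, (b k / w k) / (Bn / Wn))
      = (∑ k ∈ Finset.Icc 1 K, Wn * (b k / w k)) / Bn := by
    rw [Finset.sum_div]
    apply Finset.sum_congr rfl
    intro k _
    rw [div_div_eq_mul_div, mul_comm]
  have h2 : (∑ k ∈ Finset.Icc 1 K, Wn * (b k / w k) / K)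
      = (∑ k ∈ Finset.Icc 1 K, Wn * (b k / w k)) / (K:ℝ) := by
    rw [Finset.sum_div]
  have hiff : ((∑ k ∈ Finset.Icc 1 K, (b k / w k) / (Bn / Wn)) ≤ (K : ℝ)) ↔
      ((∑ k ∈ Finset.Icc 1 K, Wn * (b k / w k) / K) ≤ Bn) := by
    rw [h1, h2, div_le_iff₀ hBn, div_le_iff₀ hK', mul_comm]
  unfold tildeB
  split_ifs with h
  · exact (min_eq_left (hiff.mp h)).symm
  · exact (min_eq_right (le_of_lt (lt_of_not_ge (fun hle => h (hiff.mpr hle))))).symm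

/-- If `S' = (K,b,w,N,B',W')` has more resources than
`S = (K,b,w,N,B,W)` (`B'_n ≥ B_n`, `W'_n ≥ W_n` for every worker), then the
equivalent subsystems satisfy `B̃'_n ≥ B̃_n` and `W̃'_n ≥ W̃_n` for every worker. -/
theorem stmt_14 (N K : ℕ) (hK : 1 ≤ K) (B W B' W' b w : ℕ → ℝ)
    (hB : ∀ n ∈ Finset.Icc 1 N, 0 < B n) (hW : ∀ n ∈ Finset.Icc 1 N, 0 < W n)
    (hB' : ∀ n ∈ Finset.Icc 1 N, 0 < B' n) (hW' : ∀ n ∈ Finset.Icc 1 N, 0 < W' n)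
    (hb : ∀ k ∈ Finset.Icc 1 K, 0 < b k) (hw : ∀ k ∈ Finset.Icc 1 K, 0 < w k)
    (hBB : ∀ n ∈ Finset.Icc 1 N, B n ≤ B' n)
    (hWW : ∀ n ∈ Finset.Icc 1 N, W n ≤ W' n) :
    ∀ n ∈ Finset.Icc 1 N,
      tildeB K b w (B n) (W n) ≤ tildeB K b w (B' n) (W' n) ∧
      tildeW K b w (B n) (W n) ≤ tildeW K b w (B' n) (W' n) := by
  intro n hn
  have hKpos : 0 < K := hK
  have hK' : (0:ℝ) < (K:ℝ) := by exact_mod_cast hKpos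
  have hc : ∀ k ∈ Finset.Icc 1 K, 0 < b k / w k :=
    fun k hk => div_pos (hb k hk) (hw k hk)
  constructor
  · rw [tildeB_eq_min K hKpos b w _ _ (hB n hn) (hW n hn),
      tildeB_eq_min K hKpos b w _ _ (hB' n hn) (hW' n hn)]
    apply min_le_min _ (hBB n hn)
    apply Finset.sum_le_sum
    intro k hk
    have := le_of_lt (hc k hk)
    gcongr
    exact hWW n hn
  · rw [tildeW_eq_min K hKpos b w _ _ (hW n hn),
      tildeW_eq_min K hKpos b w _ _ (hW' n hn)]
    apply min_le_min _ (hWW n hn)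
    apply Finset.sum_le_sum
    intro k hk
    have := hc k hk
    gcongr
    exact hBB n hn
end

section
/- Consider the system with N = 2 workers and K = 2 applications given by B_1 = 1, W_1 = 2, B_2 = 2, W_2 = 1, b_1 = 1, w_1 = 2, b_2 = 2, w_2 = 1. The Nash-equilibrium throughputs given by the closed-form formulas are α^nc_1 = α^nc_2 = 3/4, while the throughput vector (1, 1) is feasible (achieved by processing application 1 exclusively on worker 1 and application 2 exclusively on worker 2). In particular, (1,1) is strictly Pareto-superior to the Nash equilibrium, so the Nash equilibrium of this system is not Pareto optimal. -/
/-- For the system with `N = 2` workers (`B_1 = 1, W_1 = 2, B_2 = 2,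
W_2 = 1`) and `K = 2` applications (`b_1 = 1, w_1 = 2, b_2 = 2, w_2 = 1`), the
Nash-equilibrium throughputs are `α^nc_1 = α^nc_2 = 3/4`, the vector `(1,1)` is
feasible, and `(1,1)` is strictly Pareto-superior to the Nash equilibrium; in
particular the Nash equilibrium is not Pareto optimal. -/
theorem stmt_15 :
    let B : ℕ → ℝ := fun n => if n = 1 then 1 else 2
    let W : ℕ → ℝ := fun n => if n = 1 then 2 else 1
    let b : ℕ → ℝ := fun k => if k = 1 then 1 else 2
    let w : ℕ → ℝ := fun k => if k = 1 then 2 else 1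
    let αnc : ℕ → ℝ := fun k => ∑ n ∈ Finset.Icc 1 2, nashRate 2 b w (B n) (W n) k
    (αnc 1 = 3 / 4 ∧ αnc 2 = 3 / 4) ∧
    Feasible 2 2 B W b w (fun _ => 1) ∧
    (∀ k ∈ Finset.Icc 1 2, αnc k < 1) ∧
    (∃ β : ℕ → ℝ, Feasible 2 2 B W b w β ∧
      (∀ k ∈ Finset.Icc 1 2, αnc k ≤ β k) ∧
      (∃ j ∈ Finset.Icc 1 2, αnc j < β j)) := by
  intro B W b w αnc
  have hIcc : Finset.Icc 1 2 = ({1, 2} : Finset ℕ) := rfl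
  have h1 : ∀ k, nashRate 2 b w (B 1) (W 1) k = 1 / (2 * b k) := by
    intro k
    have hB : B 1 = 1 := by simp [B]
    have hW : W 1 = 2 := by simp [W]
    rw [hB, hW, nashRate, if_pos]
    · norm_num
    · rw [hIcc]; norm_num [b, w]
  have h2 : ∀ k, nashRate 2 b w (B 2) (W 2) k = 1 / (2 * w k) := by
    intro k
    have hB : B 2 = 2 := by simp [B]
    have hW : W 2 = 1 := by simp [W]
    rw [hB, hW, nashRate, if_neg, if_pos]
    · norm_num
    · rw [hIcc]; norm_num [b, w]
    · rw [hIcc]; norm_num [b, w]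
  have hα : ∀ k, αnc k = 1 / (2 * b k) + 1 / (2 * w k) := by
    intro k
    show ∑ n ∈ Finset.Icc 1 2, nashRate 2 b w (B n) (W n) k = _
    rw [hIcc, Finset.sum_pair (by norm_num), h1, h2]
  have hα1 : αnc 1 = 3 / 4 := by rw [hα]; norm_num [b, w]
  have hα2 : αnc 2 = 3 / 4 := by rw [hα]; norm_num [b, w]
  have hFeas : Feasible 2 2 B W b w (fun _ => 1) := by
    refine ⟨fun k _ => by norm_num, fun n k => if n = k then 1 else 0,
      fun n _ k _ => by positivity, ?_, ?_, ?_⟩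
    · intro k hk
      rw [hIcc] at hk ⊢
      rcases Finset.mem_insert.mp hk with h | h
      · subst h; norm_num
      · rw [Finset.mem_singleton] at h; subst h; norm_num
    · intro n hn
      rw [hIcc] at hn ⊢
      rcases Finset.mem_insert.mp hn with h | h
      · subst h; norm_num [b, w, W]
      · rw [Finset.mem_singleton] at h; subst h; norm_num [b, w, W]
    · intro n hn
      rw [hIcc] at hn ⊢
      rcases Finset.mem_insert.mp hn with h | h
      · subst h; norm_num [b, w, B]
      · rw [Finset.mem_singleton] at h; subst h; norm_num [b, w, B]
  have hlt : ∀ k ∈ Finset.Icc 1 2, αnc k < 1 := by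
    intro k hk
    rw [hIcc] at hk
    rcases Finset.mem_insert.mp hk with h | h
    · subst h; rw [hα1]; norm_num
    · rw [Finset.mem_singleton] at h; subst h; rw [hα2]; norm_num
  exact ⟨⟨hα1, hα2⟩, hFeas, hlt,
    fun _ => 1, hFeas, fun k hk => le_of_lt (hlt k hk),
    1, by norm_num, by rw [hα1]; norm_num⟩
end

section
/- For K ≥ 2 and M ≥ 1, consider the single-worker system S_{M,K} with N = 1, B_1 = 1, W_1 = 1, b = (1/M, 1, ..., 1) and w = (1/M, 1, ..., 1). Then: (1) since Σ_{k=1}^K C_1/c_k = K, the Nash-equilibrium throughput vector is α^nc = (M/K, 1/K, ..., 1/K); (2) the maximum of Σ_{k=1}^K α_k over the utility set equals M, attained at (M, 0, ..., 0); hence (3) the inefficiency ratio I_Σ(S_{M,K}) = M / (Σ_k α^nc_k) = M·K/(M + K − 1), which tends to K as M → ∞. Consequently, the price of anarchy sup_S I_Σ(S) is unbounded (it is at least K for every K). -/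
private lemma sum_Icc_one_split (K : ℕ) (h : 1 ≤ K) (f : ℕ → ℝ) :
    ∑ k ∈ Finset.Icc 1 K, f k = f 1 + ∑ k ∈ Finset.Icc 2 K, f k := by
  rw [show Finset.Icc 2 K = (Finset.Icc 1 K).erase 1 by
    rw [Finset.Icc_erase_left, ← Finset.Icc_add_one_left_eq_Ioc]; rfl]
  exact (Finset.add_sum_erase _ f (by simp [h])).symm

/-- For the single-worker system `S_{M,K}` (`B_1 = W_1 = 1`,
`b = w = (1/M,1,...,1)`): (1) `Σ_k C_1/c_k = K` and the Nash throughputs are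
`(M/K, 1/K, ..., 1/K)`; (2) the maximum of `Σ_k α_k` over the utility set is `M`,
attained at `(M,0,...,0)`; (3) the inefficiency ratio equals `M·K/(M+K−1)`, which
tends to `K` as `M → ∞` — so the price of anarchy is at least `K` for every `K`. -/
theorem stmt_16 (K : ℕ) (hK : 2 ≤ K) (M : ℝ) (hM : 1 ≤ M) :
    let b : ℕ → ℝ := fun k => if k = 1 then 1 / M else 1
    let w : ℕ → ℝ := fun k => if k = 1 then 1 / M else 1
    -- (1) Σ_k C_1/c_k = K and the Nash equilibrium is (M/K, 1/K, ..., 1/K)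
    ((∑ k ∈ Finset.Icc 1 K, ((1 : ℝ) / 1) / (b k / w k)) = (K : ℝ) ∧
      nashRate K b w 1 1 1 = M / K ∧
      (∀ k ∈ Finset.Icc 2 K, nashRate K b w 1 1 k = 1 / K)) ∧
    -- (2) the maximum of the total throughput over the utility set equals M ...
    (IsGreatest {s : ℝ | ∃ α : ℕ → ℝ,
        (∀ k ∈ Finset.Icc 1 K, 0 ≤ α k) ∧
        (∑ k ∈ Finset.Icc 1 K, α k * w k) ≤ 1 ∧
        (∑ k ∈ Finset.Icc 1 K, α k * b k) ≤ 1 ∧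
        s = ∑ k ∈ Finset.Icc 1 K, α k} M ∧
      -- ... attained at (M, 0, ..., 0)
      ((∀ k ∈ Finset.Icc 1 K, (0 : ℝ) ≤ (if k = 1 then M else 0)) ∧
        (∑ k ∈ Finset.Icc 1 K, (if k = 1 then M else 0) * w k) ≤ 1 ∧
        (∑ k ∈ Finset.Icc 1 K, (if k = 1 then M else 0) * b k) ≤ 1 ∧
        (∑ k ∈ Finset.Icc 1 K, (if k = 1 then M else (0 : ℝ))) = M)) ∧
    -- (3) the inefficiency ratio and its limit
    (M / (∑ k ∈ Finset.Icc 1 K, nashRate K b w 1 1 k) = M * K / (M + K - 1) ∧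
      Filter.Tendsto (fun M' : ℝ => M' * K / (M' + K - 1))
        Filter.atTop (nhds (K : ℝ))) := by
  intro b w
  have hK1 : 1 ≤ K := le_trans one_le_two hK
  have hM0 : (0 : ℝ) < M := lt_of_lt_of_le one_pos hM
  have hMne : M ≠ 0 := ne_of_gt hM0
  have hKR : (0 : ℝ) < (K : ℝ) := by exact_mod_cast lt_of_lt_of_le two_pos hK
  have hKne : (K : ℝ) ≠ 0 := ne_of_gt hKR
  have hKR2 : (2 : ℝ) ≤ (K : ℝ) := by exact_mod_cast hK
  have hbw : ∀ k, b k / w k = 1 := by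
    intro k
    simp only [b, w]
    split
    · rw [div_self (by positivity)]
    · norm_num
  have hsum1 : (∑ k ∈ Finset.Icc 1 K, ((1 : ℝ) / 1) / (b k / w k)) = (K : ℝ) := by
    simp [hbw]
  have hcond : (∑ j ∈ Finset.Icc 1 K, ((1:ℝ) / 1) / (b j / w j)) ≤ (K : ℝ) :=
    le_of_eq hsum1
  have hrate : ∀ k, nashRate K b w 1 1 k = 1 / (K * b k) := by
    intro k
    rw [nashRate, if_pos hcond]
  have hrate1 : nashRate K b w 1 1 1 = M / K := by
    rw [hrate]
    simp only [b, if_pos rfl]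
    field_simp
  have hrate2 : ∀ k ∈ Finset.Icc 2 K, nashRate K b w 1 1 k = 1 / K := by
    intro k hk
    have hk1 : k ≠ 1 := by
      have := (Finset.mem_Icc.mp hk).1; omega
    rw [hrate]
    simp [b, hk1]
  have hcard2 : (Finset.Icc 2 K).card = K - 1 := by
    rw [Nat.card_Icc]; omega
  have hcastK1 : ((K - 1 : ℕ) : ℝ) = (K : ℝ) - 1 := by
    have : (1:ℕ) ≤ K := hK1
    push_cast [this]; ring
  have hsumnash : (∑ k ∈ Finset.Icc 1 K, nashRate K b w 1 1 k) = (M + K - 1) / K := by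
    rw [sum_Icc_one_split K hK1, hrate1,
      Finset.sum_congr rfl (fun k hk => hrate2 k hk), Finset.sum_const, hcard2,
      nsmul_eq_mul, hcastK1]
    field_simp
    ring
  have hdenpos : (0 : ℝ) < M + K - 1 := by linarith
  -- witness sums
  have hwsum : (∑ k ∈ Finset.Icc 1 K, (if k = 1 then M else 0) * w k) = 1 := by
    rw [sum_Icc_one_split K hK1]
    have : ∀ k ∈ Finset.Icc 2 K, (if k = 1 then M else (0:ℝ)) * w k = 0 := by
      intro k hk
      have hk1 : k ≠ 1 := by have := (Finset.mem_Icc.mp hk).1; omega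
      simp [hk1]
    rw [Finset.sum_congr rfl this, Finset.sum_const, smul_zero]
    simp only [w, if_pos rfl]
    field_simp
    simp
  have hbsum : (∑ k ∈ Finset.Icc 1 K, (if k = 1 then M else 0) * b k) = 1 := by
    rw [sum_Icc_one_split K hK1]
    have : ∀ k ∈ Finset.Icc 2 K, (if k = 1 then M else (0:ℝ)) * b k = 0 := by
      intro k hk
      have hk1 : k ≠ 1 := by have := (Finset.mem_Icc.mp hk).1; omega
      simp [hk1]
    rw [Finset.sum_congr rfl this, Finset.sum_const, smul_zero]
    simp only [b, if_pos rfl]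
    field_simp
    simp
  have hasum : (∑ k ∈ Finset.Icc 1 K, (if k = 1 then M else (0:ℝ))) = M := by
    rw [sum_Icc_one_split K hK1]
    have : ∀ k ∈ Finset.Icc 2 K, (if k = 1 then M else (0:ℝ)) = 0 := by
      intro k hk
      have hk1 : k ≠ 1 := by have := (Finset.mem_Icc.mp hk).1; omega
      simp [hk1]
    rw [Finset.sum_congr rfl this, Finset.sum_const, smul_zero]
    simp
  have hnonneg : ∀ k ∈ Finset.Icc 1 K, (0:ℝ) ≤ (if k = 1 then M else 0) := by
    intro k _
    split <;> [linarith; exact le_rfl]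
  refine ⟨⟨hsum1, hrate1, hrate2⟩, ⟨⟨⟨fun k => if k = 1 then M else 0,
      hnonneg, le_of_eq hwsum, le_of_eq hbsum, hasum.symm⟩, ?_⟩,
      hnonneg, le_of_eq hwsum, le_of_eq hbsum, hasum⟩, ?_, ?_⟩
  · -- upper bound
    rintro s ⟨α, hpos, hw, _, hs⟩
    have step : ∀ k ∈ Finset.Icc 1 K, α k ≤ M * (α k * w k) := by
      intro k hk
      by_cases hk1 : k = 1
      · simp only [w, hk1, if_pos rfl]
        rw [mul_comm M, mul_assoc]
        rw [one_div, inv_mul_cancel₀ hMne, mul_one]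
      · simp only [w, if_neg hk1, mul_one]
        nlinarith [hpos k hk]
    calc s = ∑ k ∈ Finset.Icc 1 K, α k := hs
      _ ≤ ∑ k ∈ Finset.Icc 1 K, M * (α k * w k) := Finset.sum_le_sum step
      _ = M * ∑ k ∈ Finset.Icc 1 K, α k * w k := by rw [Finset.mul_sum]
      _ ≤ M * 1 := by apply mul_le_mul_of_nonneg_left hw (le_of_lt hM0)
      _ = M := mul_one M
  · -- ratio
    rw [hsumnash, div_div_eq_mul_div]
  · -- tendsto
    have h0 : Filter.Tendsto (fun M' : ℝ => (K:ℝ) * ((K:ℝ) - 1) / (M' + ((K:ℝ) - 1)))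
        Filter.atTop (nhds 0) :=
      Filter.Tendsto.div_atTop tendsto_const_nhds
        (Filter.tendsto_atTop_add_const_right _ _ Filter.tendsto_id)
    have h2 : Filter.Tendsto
        (fun M' : ℝ => (K:ℝ) - (K:ℝ) * ((K:ℝ) - 1) / (M' + ((K:ℝ) - 1)))
        Filter.atTop (nhds ((K:ℝ) - 0)) := tendsto_const_nhds.sub h0
    rw [sub_zero] at h2
    refine h2.congr' ?_
    filter_upwards [Filter.eventually_ge_atTop (1:ℝ)] with M' hM'
    have hne : M' + (K:ℝ) - 1 ≠ 0 := by nlinarith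
    have hne' : M' + ((K:ℝ) - 1) ≠ 0 := by nlinarith
    field_simp
    ring
end

section
/- Consider a single worker of computing power W > 0 and K ≥ 2 applications with c_1 < c_2 < ... < c_K, and define B_low = W·K/(Σ_{k=1}^K 1/c_k) and B_high = (W/K)·Σ_{k=1}^K c_k. Let α^before_k = B_low/(K·b_k) and α^after_k = W/(K·w_k) be the Nash-equilibrium throughputs at bandwidths B_low and B_high respectively. Then the ratio of average throughputs satisfies (Σ_{k=1}^K α^before_k)/(Σ_{k=1}^K α^after_k) = (K/Σ_{k=1}^K 1/c_k) · (Σ_{k=1}^K 1/b_k)/(Σ_{k=1}^K 1/w_k). Moreover, this degradation of the average throughput can be made arbitrarily close to K: for w = (1, 1/ε, ..., 1/ε) and b = (1, 1/ε², ..., 1/ε²) with ε > 0, the ratio equals K·(1 + (K−1)·ε²)/(1 + (K−1)·ε)², which tends to K as ε → 0. -/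
lemma sum_if_aux (K : ℕ) (hK : 1 ≤ K) (a c : ℝ) :
    ∑ k ∈ Finset.Icc 1 K, (if k = 1 then a else c) = a + ((K : ℝ) - 1) * c := by
  have hins : Finset.Icc 1 K = insert 1 (Finset.Icc 2 K) := by
    ext x; simp [Finset.mem_Icc]; omega
  rw [hins, Finset.sum_insert (by simp)]
  rw [Finset.sum_congr rfl (fun k hk => if_neg (by simp [Finset.mem_Icc] at hk; omega))]
  rw [Finset.sum_const, Nat.card_Icc, nsmul_eq_mul]
  have : ((K + 1 - 2 : ℕ) : ℝ) = (K : ℝ) - 1 := by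
    have : K + 1 - 2 = K - 1 := by omega
    rw [this]; push_cast [hK]; ring
  rw [this]; simp

lemma key_aux (K : ℕ) (hK : 1 ≤ K) (b w : ℕ → ℝ) (Wn : ℝ) (hWn : 0 < Wn)
    (hb : ∀ k ∈ Finset.Icc 1 K, 0 < b k) (hw : ∀ k ∈ Finset.Icc 1 K, 0 < w k) :
    (∑ k ∈ Finset.Icc 1 K,
        (Wn * K / (∑ p ∈ Finset.Icc 1 K, 1 / (b p / w p))) / (K * b k)) /
        (∑ k ∈ Finset.Icc 1 K, Wn / (K * w k)) =
      ((K : ℝ) / ∑ k ∈ Finset.Icc 1 K, 1 / (b k / w k)) *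
        ((∑ k ∈ Finset.Icc 1 K, 1 / b k) / (∑ k ∈ Finset.Icc 1 K, 1 / w k)) := by
  have hne : (Finset.Icc 1 K).Nonempty := ⟨1, by simp [Finset.mem_Icc]; omega⟩
  have hS : 0 < ∑ p ∈ Finset.Icc 1 K, 1 / (b p / w p) :=
    Finset.sum_pos (fun p hp => by have := hb p hp; have := hw p hp; positivity) hne
  have hA : 0 < ∑ k ∈ Finset.Icc 1 K, 1 / b k :=
    Finset.sum_pos (fun p hp => by have := hb p hp; positivity) hne
  have hW : 0 < ∑ k ∈ Finset.Icc 1 K, 1 / w k :=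
    Finset.sum_pos (fun p hp => by have := hw p hp; positivity) hne
  have hK0 : (K : ℝ) ≠ 0 := by positivity
  have e1 : ∑ k ∈ Finset.Icc 1 K,
      (Wn * K / (∑ p ∈ Finset.Icc 1 K, 1 / (b p / w p))) / (K * b k)
      = (Wn / (∑ p ∈ Finset.Icc 1 K, 1 / (b p / w p))) * ∑ k ∈ Finset.Icc 1 K, 1 / b k := by
    rw [Finset.mul_sum]
    refine Finset.sum_congr rfl (fun k hk => ?_)
    have hbk := hb k hk
    field_simp
  have e2 : ∑ k ∈ Finset.Icc 1 K, Wn / (K * w k)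
      = (Wn / K) * ∑ k ∈ Finset.Icc 1 K, 1 / w k := by
    rw [Finset.mul_sum]
    refine Finset.sum_congr rfl (fun k hk => ?_)
    have hwk := hw k hk
    field_simp
  have hWn' : Wn ≠ 0 := hWn.ne'
  have hS' := hS.ne'
  have hW' := hW.ne'
  rw [e1, e2]
  field_simp


/-- On a single worker of power `W > 0` with `K ≥ 2` applications and
`c_1 < ... < c_K`, with `α^before_k = B_low/(K·b_k)` and `α^after_k = W/(K·w_k)` the
Nash throughputs at bandwidths `B_low = W·K/(Σ 1/c_k)` and `B_high = (W/K)·Σ c_k`,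
the ratio of average throughputs is `(K/Σ 1/c_k)·(Σ 1/b_k)/(Σ 1/w_k)`; moreover for
`w = (1,1/ε,...,1/ε)`, `b = (1,1/ε²,...,1/ε²)` this ratio equals
`K·(1+(K−1)ε²)/(1+(K−1)ε)²`, which tends to `K` as `ε → 0⁺`. -/
theorem stmt_19 (K : ℕ) (hK : 2 ≤ K) (b w : ℕ → ℝ) (Wn : ℝ) (hWn : 0 < Wn)
    (hb : ∀ k ∈ Finset.Icc 1 K, 0 < b k) (hw : ∀ k ∈ Finset.Icc 1 K, 0 < w k)
    (hc : ∀ k, 1 ≤ k → k < K → b k / w k < b (k + 1) / w (k + 1)) :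
    ((∑ k ∈ Finset.Icc 1 K,
        (Wn * K / (∑ p ∈ Finset.Icc 1 K, 1 / (b p / w p))) / (K * b k)) /
        (∑ k ∈ Finset.Icc 1 K, Wn / (K * w k)) =
      ((K : ℝ) / ∑ k ∈ Finset.Icc 1 K, 1 / (b k / w k)) *
        ((∑ k ∈ Finset.Icc 1 K, 1 / b k) / (∑ k ∈ Finset.Icc 1 K, 1 / w k))) ∧
    (∀ ε : ℝ, 0 < ε →
      ∀ b' w' : ℕ → ℝ,
        (∀ k, b' k = if k = 1 then 1 else 1 / ε ^ 2) →
        (∀ k, w' k = if k = 1 then 1 else 1 / ε) →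
        (∑ k ∈ Finset.Icc 1 K,
            (Wn * K / (∑ p ∈ Finset.Icc 1 K, 1 / (b' p / w' p))) / (K * b' k)) /
            (∑ k ∈ Finset.Icc 1 K, Wn / (K * w' k)) =
          (K : ℝ) * (1 + (K - 1) * ε ^ 2) / (1 + (K - 1) * ε) ^ 2) ∧
    Filter.Tendsto
      (fun ε : ℝ => (K : ℝ) * (1 + (K - 1) * ε ^ 2) / (1 + (K - 1) * ε) ^ 2)
      (nhdsWithin 0 (Set.Ioi 0)) (nhds (K : ℝ)) := by
  have hK1 : 1 ≤ K := by omega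
  have hKR : (1:ℝ) ≤ (K:ℝ) := by exact_mod_cast hK1
  refine ⟨key_aux K hK1 b w Wn hWn hb hw, ?_, ?_⟩
  · intro ε hε b' w' hb' hw'
    have hε' : ε ≠ 0 := hε.ne'
    have hb'pos : ∀ k ∈ Finset.Icc 1 K, 0 < b' k := by
      intro k _; rw [hb']; split <;> positivity
    have hw'pos : ∀ k ∈ Finset.Icc 1 K, 0 < w' k := by
      intro k _; rw [hw']; split <;> positivity
    rw [key_aux K hK1 b' w' Wn hWn hb'pos hw'pos]
    have e1 : ∑ k ∈ Finset.Icc 1 K, 1 / (b' k / w' k) = 1 + ((K:ℝ) - 1) * ε := by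
      rw [Finset.sum_congr rfl
        (fun k _ => show 1 / (b' k / w' k) = if k = 1 then (1:ℝ) else ε by
          rw [hb', hw']; split <;> (field_simp; try ring))]
      exact sum_if_aux K hK1 1 ε
    have e2 : ∑ k ∈ Finset.Icc 1 K, 1 / b' k = 1 + ((K:ℝ) - 1) * ε ^ 2 := by
      rw [Finset.sum_congr rfl
        (fun k _ => show 1 / b' k = if k = 1 then (1:ℝ) else ε ^ 2 by
          rw [hb']; split <;> (field_simp; try ring))]
      exact sum_if_aux K hK1 1 (ε ^ 2)
    have e3 : ∑ k ∈ Finset.Icc 1 K, 1 / w' k = 1 + ((K:ℝ) - 1) * ε := by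
      rw [Finset.sum_congr rfl
        (fun k _ => show 1 / w' k = if k = 1 then (1:ℝ) else ε by
          rw [hw']; split <;> field_simp)]
      exact sum_if_aux K hK1 1 ε
    rw [e1, e2, e3]
    rw [div_mul_div_comm, ← sq]
  · have hcont : ContinuousAt
        (fun ε : ℝ => (K : ℝ) * (1 + (K - 1) * ε ^ 2) / (1 + (K - 1) * ε) ^ 2) 0 := by
      apply ContinuousAt.div (by fun_prop) (by fun_prop)
      norm_num
    have h2 : Filter.Tendsto
        (fun ε : ℝ => (K : ℝ) * (1 + (K - 1) * ε ^ 2) / (1 + (K - 1) * ε) ^ 2)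
        (nhds 0) (nhds (K : ℝ)) := by
      convert hcont.tendsto using 2
      norm_num
    exact h2.mono_left nhdsWithin_le_nhds
end
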